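/- Key inequality behind the Ω(√T) fluid gap: Let A ∈ ℝ^{d×n}, r ∈ ℝⁿ, B ∈ ℝ₊^d, and for z ∈ ℝ₊ⁿ let v(z) denote the optimal value of the LP P[z]: max{r'x : Ax ≤ B, 0 ≤ x ≤ z}. Let Z be an integrable random vector taking values in ℝ₊ⁿ with mean μ = E[Z], and assume v(Z) is integrable. Suppose (α¹, β¹) and (α², β²) are both feasible for the dual D[μ]: min{α'B + β'μ : A'α + β ≥ r, α ≥ 0, β ≥ 0}, and both are optimal with no duality gap, i.e., (α^k)'B + (β^k)'μ = v(μ) for k = 1, 2. Then v(μ) − E[v(Z)] ≥ E[ ((μ − Z)'(β¹ − β²))₊ ], where (y)₊ = max(y, 0). -/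
import Mathlib


open MeasureTheory Matrix

lemma weak_duality_aux {d n : ℕ} (A : Matrix (Fin d) (Fin n) ℝ) (r : Fin n → ℝ)
    (B : Fin d → ℝ) (z x : Fin n → ℝ) (α : Fin d → ℝ) (β : Fin n → ℝ)
    (hAx : ∀ i, A.mulVec x i ≤ B i) (hx0 : ∀ j, 0 ≤ x j) (hxz : ∀ j, x j ≤ z j)
    (hdual : ∀ j, r j ≤ Aᵀ.mulVec α j + β j) (hα : ∀ i, 0 ≤ α i) (hβ : ∀ j, 0 ≤ β j) :
    r ⬝ᵥ x ≤ α ⬝ᵥ B + β ⬝ᵥ z := by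
  have h1 : r ⬝ᵥ x ≤ (Aᵀ.mulVec α + β) ⬝ᵥ x := by
    simp only [dotProduct]
    exact Finset.sum_le_sum fun j _ =>
      mul_le_mul_of_nonneg_right (hdual j) (hx0 j)
  have h2 : (Aᵀ.mulVec α + β) ⬝ᵥ x = α ⬝ᵥ A.mulVec x + β ⬝ᵥ x := by
    rw [add_dotProduct, mulVec_transpose, ← dotProduct_mulVec]
  have h3 : α ⬝ᵥ A.mulVec x ≤ α ⬝ᵥ B := by
    simp only [dotProduct]
    exact Finset.sum_le_sum fun i _ => mul_le_mul_of_nonneg_left (hAx i) (hα i)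
  have h4 : β ⬝ᵥ x ≤ β ⬝ᵥ z := by
    simp only [dotProduct]
    exact Finset.sum_le_sum fun j _ => mul_le_mul_of_nonneg_left (hxz j) (hβ j)
  rw [h2] at h1
  linarith

theorem fluid_gap_key_inequality
    {Ω : Type*} [MeasurableSpace Ω] (P : Measure Ω) [IsProbabilityMeasure P]
    (d n : ℕ) (A : Matrix (Fin d) (Fin n) ℝ) (r : Fin n → ℝ) (B : Fin d → ℝ)
    (hB : ∀ i, 0 ≤ B i)
    -- the LP value function v : for every z ≥ 0, v z is the maximum of r'x over the
    -- (compact, nonempty) feasible region {x : Ax ≤ B, 0 ≤ x ≤ z}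
    (v : (Fin n → ℝ) → ℝ)
    (hv : ∀ z : Fin n → ℝ, (∀ j, 0 ≤ z j) →
      IsGreatest {val : ℝ | ∃ x : Fin n → ℝ,
        (∀ i, A.mulVec x i ≤ B i) ∧ (∀ j, 0 ≤ x j) ∧ (∀ j, x j ≤ z j) ∧
        val = r ⬝ᵥ x} (v z))
    -- the random demand vector Z, nonnegative and integrable, with mean μvec
    (Z : Ω → Fin n → ℝ)
    (hZpos : ∀ x j, 0 ≤ Z x j)
    (hZint : ∀ j, Integrable (fun x => Z x j) P)
    (μvec : Fin n → ℝ)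
    (hμvec : ∀ j, μvec j = ∫ x, Z x j ∂P)
    (hvZint : Integrable (fun x => v (Z x)) P)
    -- two dual solutions, both feasible and optimal for the fluid dual D[μvec]
    (α₁ α₂ : Fin d → ℝ) (β₁ β₂ : Fin n → ℝ)
    (hfeas₁ : (∀ j, r j ≤ Aᵀ.mulVec α₁ j + β₁ j) ∧ (∀ i, 0 ≤ α₁ i) ∧ (∀ j, 0 ≤ β₁ j))
    (hfeas₂ : (∀ j, r j ≤ Aᵀ.mulVec α₂ j + β₂ j) ∧ (∀ i, 0 ≤ α₂ i) ∧ (∀ j, 0 ≤ β₂ j))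
    (hopt₁ : α₁ ⬝ᵥ B + β₁ ⬝ᵥ μvec = v μvec)
    (hopt₂ : α₂ ⬝ᵥ B + β₂ ⬝ᵥ μvec = v μvec) :
    (∫ x, max ((μvec - Z x) ⬝ᵥ (β₁ - β₂)) 0 ∂P)
      ≤ v μvec - ∫ x, v (Z x) ∂P := by
  obtain ⟨hd₁, hα₁, hβ₁⟩ := hfeas₁
  obtain ⟨hd₂, hα₂, hβ₂⟩ := hfeas₂
  -- weak duality at each Z x
  have hweak : ∀ (α : Fin d → ℝ) (β : Fin n → ℝ),
      (∀ j, r j ≤ Aᵀ.mulVec α j + β j) → (∀ i, 0 ≤ α i) → (∀ j, 0 ≤ β j) →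
      ∀ x : Ω, v (Z x) ≤ α ⬝ᵥ B + β ⬝ᵥ (Z x) := by
    intro α β hd hα hβ x
    obtain ⟨xx, hAxx, hxx0, hxxz, hval⟩ := (hv (Z x) (hZpos x)).1
    rw [hval]
    exact weak_duality_aux A r B (Z x) xx α β hAxx hxx0 hxxz hd hα hβ
  -- pointwise key inequality
  have hpoint : ∀ x : Ω,
      max ((μvec - Z x) ⬝ᵥ (β₁ - β₂)) 0 + β₂ ⬝ᵥ (μvec - Z x)
        ≤ v μvec - v (Z x) := by
    intro x
    have h1 : v (Z x) ≤ α₁ ⬝ᵥ B + β₁ ⬝ᵥ (Z x) := hweak α₁ β₁ hd₁ hα₁ hβ₁ x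
    have h2 : v (Z x) ≤ α₂ ⬝ᵥ B + β₂ ⬝ᵥ (Z x) := hweak α₂ β₂ hd₂ hα₂ hβ₂ x
    have e1 : β₁ ⬝ᵥ (μvec - Z x) = β₁ ⬝ᵥ μvec - β₁ ⬝ᵥ (Z x) := dotProduct_sub β₁ _ _
    have e2 : β₂ ⬝ᵥ (μvec - Z x) = β₂ ⬝ᵥ μvec - β₂ ⬝ᵥ (Z x) := dotProduct_sub β₂ _ _
    have e3 : (μvec - Z x) ⬝ᵥ (β₁ - β₂)
        = β₁ ⬝ᵥ (μvec - Z x) - β₂ ⬝ᵥ (μvec - Z x) := by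
      rw [dotProduct_sub, dotProduct_comm _ β₁, dotProduct_comm _ β₂]
    rcases le_total ((μvec - Z x) ⬝ᵥ (β₁ - β₂)) 0 with h | h
    · rw [max_eq_right h]; linarith
    · rw [max_eq_left h]; linarith
  -- the correction term integrates to zero
  set h : Ω → ℝ := fun x => β₂ ⬝ᵥ (μvec - Z x) with hh
  have hhint : Integrable h P := by
    have : h = fun x => ∑ j, β₂ j * (μvec j - Z x j) := by
      funext x; simp [hh, dotProduct]
    rw [this]
    exact integrable_finset_sum _ fun j _ => by
      simpa using (((integrable_const (μvec j)).sub (hZint j)).const_mul (β₂ j))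
  have hhzero : ∫ x, h x ∂P = 0 := by
    have : ∀ x, h x = ∑ j, β₂ j * (μvec j - Z x j) := by
      intro x; simp [hh, dotProduct]
    have hintj : ∀ j : Fin n, Integrable (fun x => β₂ j * (μvec j - Z x j)) P :=
      fun j => by
        simpa using (((integrable_const (μvec j)).sub (hZint j)).const_mul (β₂ j))
    rw [integral_congr_ae (Filter.Eventually.of_forall this),
      integral_finset_sum _ fun j _ => hintj j]
    apply Finset.sum_eq_zero
    intro j _
    rw [integral_const_mul, integral_sub (integrable_const _) (hZint j),
      integral_const]
    simp [hμvec j]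
  -- integrability of the positive part
  set g : Ω → ℝ := fun x => max ((μvec - Z x) ⬝ᵥ (β₁ - β₂)) 0 with hg
  have hbase : Integrable (fun x => (μvec - Z x) ⬝ᵥ (β₁ - β₂)) P := by
    have : (fun x => (μvec - Z x) ⬝ᵥ (β₁ - β₂))
        = fun x => ∑ j, (μvec j - Z x j) * (β₁ j - β₂ j) := by
      funext x; simp [dotProduct]
    rw [this]
    exact integrable_finset_sum _ fun j _ => by
      simpa using (((integrable_const (μvec j)).sub (hZint j)).mul_const (β₁ j - β₂ j))
  have hgint : Integrable g P := hbase.pos_part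
  -- integrate the pointwise inequality
  have hmono : ∫ x, (g x + h x) ∂P ≤ ∫ x, (v μvec - v (Z x)) ∂P :=
    integral_mono (hgint.add hhint) ((integrable_const _).sub hvZint) hpoint
  rw [integral_add hgint hhint, hhzero, add_zero,
    integral_sub (integrable_const _) hvZint, integral_const] at hmono
  simpa using hmono
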